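/- Let G = (V,E) be a directed graph containing a vertex cut (L,M,R) of size |M| ≤ k with k ≤ √m / 2, where m = |E|, and suppose both sides have large symmetric volume in the sense that |𝓛| ≥ Δ and |𝓡| ≥ Δ, where 𝓛 = E(L,L) ∪ E(L,M) ∪ E(M,L) ∪ E(R,L) and 𝓡 = E(R,R) ∪ E(R,M) ∪ E(M,R) ∪ E(R,L). If a pair of edges (e, e') is sampled uniformly at random from E × E (independently), then the probability that e ∈ 𝓛 and e' ∈ 𝓡 is at least Δ/(4m). -/
import Mathlib


variable {V : Type*} [Fintype V] [DecidableEq V]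

/-- `E(A,B)`: edges from `A` to `B`. -/
def edgesBetween (E : Finset (V × V)) (A B : Finset V) : Finset (V × V) :=
  E.filter (fun e => e.1 ∈ A ∧ e.2 ∈ B)

/-- if `(L,M,R)` is a vertex cut of size ≤ k with `k ≤ √m / 2` and both sides
have symmetric volume at least `Δ`, then a uniformly random independent pair `(e, e')` of edges
satisfies `e ∈ 𝓛` and `e' ∈ 𝓡` with probability at least `Δ / (4m)`. -/
theorem stmt3 (E : Finset (V × V)) (k Δ : ℕ) (L M R : Finset V)
    (hpart : ∀ v : V, (v ∈ L ∧ v ∉ M ∧ v ∉ R) ∨ (v ∉ L ∧ v ∈ M ∧ v ∉ R) ∨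
      (v ∉ L ∧ v ∉ M ∧ v ∈ R))
    (hL : L.Nonempty) (hR : R.Nonempty)
    (hcut : edgesBetween E L R = ∅)
    (hM : M.card ≤ k)
    (hk : (k : ℝ) ≤ Real.sqrt E.card / 2)
    (h𝓛 : Δ ≤ (edgesBetween E L L ∪ edgesBetween E L M ∪ edgesBetween E M L ∪
      edgesBetween E R L).card)
    (h𝓡 : Δ ≤ (edgesBetween E R R ∪ edgesBetween E R M ∪ edgesBetween E M R ∪
      edgesBetween E R L).card) :
    (Δ : ℝ) / (4 * E.card) ≤
      (((edgesBetween E L L ∪ edgesBetween E L M ∪ edgesBetween E M L ∪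
          edgesBetween E R L).card : ℝ) *
        ((edgesBetween E R R ∪ edgesBetween E R M ∪ edgesBetween E M R ∪
          edgesBetween E R L).card : ℝ)) / ((E.card : ℝ) ^ 2) := by
  set 𝓛 := edgesBetween E L L ∪ edgesBetween E L M ∪ edgesBetween E M L ∪
      edgesBetween E R L with h𝓛def
  set 𝓡 := edgesBetween E R R ∪ edgesBetween E R M ∪ edgesBetween E M R ∪
      edgesBetween E R L with h𝓡def
  -- every edge is in 𝓛 ∪ 𝓡 ∪ E(M,M)
  have hsub : E ⊆ 𝓛 ∪ 𝓡 ∪ edgesBetween E M M := by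
    intro e he
    have mem : ∀ {A B : Finset V}, e.1 ∈ A → e.2 ∈ B → e ∈ edgesBetween E A B :=
      fun ha hb => Finset.mem_filter.mpr ⟨he, ha, hb⟩
    have hLR : ¬(e.1 ∈ L ∧ e.2 ∈ R) := by
      rintro ⟨ha, hb⟩
      have h := mem ha hb
      rw [hcut] at h
      exact Finset.notMem_empty e h
    simp only [h𝓛def, h𝓡def, Finset.mem_union]
    rcases hpart e.1 with ⟨h1,-,-⟩|⟨-,h1,-⟩|⟨-,-,h1⟩ <;>
      rcases hpart e.2 with ⟨h2,-,-⟩|⟨-,h2,-⟩|⟨-,-,h2⟩ <;>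
      [exact Or.inl (Or.inl (Or.inl (Or.inl (Or.inl (mem h1 h2)))));
       exact Or.inl (Or.inl (Or.inl (Or.inl (Or.inr (mem h1 h2)))));
       exact absurd ⟨h1, h2⟩ hLR;
       exact Or.inl (Or.inl (Or.inl (Or.inr (mem h1 h2))));
       exact Or.inr (mem h1 h2);
       exact Or.inl (Or.inr (Or.inl (Or.inr (mem h1 h2))));
       exact Or.inl (Or.inl (Or.inr (mem h1 h2)));
       exact Or.inl (Or.inr (Or.inl (Or.inl (Or.inr (mem h1 h2)))));
       exact Or.inl (Or.inr (Or.inl (Or.inl (Or.inl (mem h1 h2)))))]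
  have hMM : (edgesBetween E M M).card ≤ k * k := by
    calc (edgesBetween E M M).card ≤ (M ×ˢ M).card := by
          apply Finset.card_le_card
          intro e he
          simp only [edgesBetween, Finset.mem_filter] at he
          simp [Finset.mem_product, he.2.1, he.2.2]
      _ = M.card * M.card := by simp [Finset.card_product]
      _ ≤ k * k := Nat.mul_le_mul hM hM
  have hcard : E.card ≤ 𝓛.card + 𝓡.card + k * k := by
    calc E.card ≤ (𝓛 ∪ 𝓡 ∪ edgesBetween E M M).card := Finset.card_le_card hsub
      _ ≤ (𝓛 ∪ 𝓡).card + (edgesBetween E M M).card := Finset.card_union_le _ _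
      _ ≤ 𝓛.card + 𝓡.card + (edgesBetween E M M).card := by
          exact Nat.add_le_add_right (Finset.card_union_le _ _) _
      _ ≤ 𝓛.card + 𝓡.card + k * k := Nat.add_le_add_left hMM _
  -- 4k² ≤ m
  have hk2 : 4 * (k : ℝ) * k ≤ E.card := by
    have h1 : (2 : ℝ) * k ≤ Real.sqrt E.card := by linarith
    have h2 : ((2 : ℝ) * k) ^ 2 ≤ Real.sqrt E.card ^ 2 := by
      apply sq_le_sq' <;> nlinarith [Real.sqrt_nonneg (E.card : ℝ), Nat.cast_nonneg (α := ℝ) k]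
    rw [Real.sq_sqrt (by positivity)] at h2
    nlinarith
  by_cases hm : E.card = 0
  · have hE : E = ∅ := Finset.card_eq_zero.mp hm
    have : 𝓛.card = 0 := by
      simp [h𝓛def, edgesBetween, hE]
    have hΔ : Δ = 0 := by omega
    simp [hΔ, hm]
  · have hmpos : (0 : ℝ) < E.card := by positivity
    rw [div_le_div_iff₀ (by positivity) (by positivity)]
    have hAB : (E.card : ℝ) ≤ (𝓛.card : ℝ) + 𝓡.card + k * k := by
      exact_mod_cast hcard
    have hA : (Δ : ℝ) ≤ 𝓛.card := by exact_mod_cast h𝓛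
    have hB : (Δ : ℝ) ≤ 𝓡.card := by exact_mod_cast h𝓡
    have hΔ0 : (0 : ℝ) ≤ Δ := Nat.cast_nonneg _
    have hA0 : (0:ℝ) ≤ (𝓛.card : ℝ) := Nat.cast_nonneg _
    have hB0 : (0:ℝ) ≤ (𝓡.card : ℝ) := Nat.cast_nonneg _
    have hsum : (3:ℝ)/4 * E.card ≤ (𝓛.card : ℝ) + 𝓡.card := by linarith
    have h2AB : (Δ:ℝ) * ((𝓛.card : ℝ) + 𝓡.card) ≤ 2 * ((𝓛.card : ℝ) * 𝓡.card) := by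
      nlinarith [mul_le_mul_of_nonneg_right hB hA0, mul_le_mul_of_nonneg_right hA hB0]
    have hkey : (Δ:ℝ) * E.card ≤ 4 * ((𝓛.card : ℝ) * 𝓡.card) := by
      nlinarith [mul_le_mul_of_nonneg_left hsum hΔ0]
    nlinarith [mul_le_mul_of_nonneg_right hkey hmpos.le]
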